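/- Let (Ω,d) and (Ω',d') be A-uniform metric spaces and let f: (Ω,d) → (Ω',d') be a map such that the induced map f: (Ω,k) → (Ω',k') between the quasihyperbolizations is H-Lipschitz for some H ≥ 0. Then there exist L = L(A,H) and λ = λ(A,H), depending only on A and H, such that f is ∂-Lipschitz with data (L,λ). -/

import Mathlib

open Metric Set Filter Topology
open scoped ENNReal Classical

noncomputable section

namespace Paper

variable {X Y : Type*}

/-- The distance function of a metric space. -/
def distFun (X : Type*) [MetricSpace X] : X → X → ℝ := fun p q => dist p q

/-- `e` is a genuine metric distance function. -/
def IsMetricDist (e : X → X → ℝ) : Prop :=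
  (∀ x, e x x = 0) ∧ (∀ x y, x ≠ y → 0 < e x y) ∧ (∀ x y, e x y = e y x) ∧
    ∀ x y z, e x z ≤ e x y + e y z

/-- Cauchy sequence with respect to the distance function `e`. -/
def CauchyWrt (e : X → X → ℝ) (u : ℕ → X) : Prop :=
  ∀ δ : ℝ, 0 < δ → ∃ N : ℕ, ∀ m, N ≤ m → ∀ n, N ≤ n → e (u m) (u n) < δ

/-- The sequence converges, w.r.t. `e`, to a point of the space. -/
def ConvWrt (e : X → X → ℝ) (u : ℕ → X) : Prop :=
  ∃ y : X, Tendsto (fun n => e (u n) y) atTop (𝓝 0)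

/-- The space is incomplete with respect to `e`:
some Cauchy sequence does not converge in the space. -/
def IncompleteWrt (e : X → X → ℝ) : Prop :=
  ∃ u : ℕ → X, CauchyWrt e u ∧ ¬ ConvWrt e u

/-- Distance from `x` to the metric boundary (the completion minus the space),
measured w.r.t. `e`: the infimum of the limits `lim_n e x (u n)` over all Cauchy
sequences `u` that have no limit in the space. -/
def bdryDistWrt (e : X → X → ℝ) (x : X) : ℝ :=
  sInf { r : ℝ | ∃ u : ℕ → X, CauchyWrt e u ∧ ¬ ConvWrt e u ∧
    Tendsto (fun n => e x (u n)) atTop (𝓝 r) }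

/-- Sequential compactness of a set w.r.t. `e`. -/
def SeqCompactWrt (e : X → X → ℝ) (s : Set X) : Prop :=
  ∀ u : ℕ → X, (∀ n, u n ∈ s) → ∃ y ∈ s, ∃ φ : ℕ → ℕ, StrictMono φ ∧
    Tendsto (fun n => e (u (φ n)) y) atTop (𝓝 0)

/-- Local compactness w.r.t. `e`: every point has arbitrarily small compact closed balls. -/
def LocallyCompactWrt (e : X → X → ℝ) : Prop :=
  ∀ x : X, ∀ r : ℝ, 0 < r → ∃ r' : ℝ, 0 < r' ∧ r' ≤ r ∧ SeqCompactWrt e { y | e x y ≤ r' }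

/-- Continuity of a curve on a set of parameters, w.r.t. `e`. -/
def ContinuousOnWrt (e : X → X → ℝ) (γ : ℝ → X) (I : Set ℝ) : Prop :=
  ∀ t ∈ I, ∀ δ : ℝ, 0 < δ → ∃ η : ℝ, 0 < η ∧ ∀ s ∈ I, |s - t| < η → e (γ s) (γ t) < δ

/-- The length (total variation) of the curve `γ` on the parameter set `I`, w.r.t. `e`. -/
def varOn (e : X → X → ℝ) (γ : ℝ → X) (I : Set ℝ) : ℝ≥0∞ :=
  ⨆ p : ℕ × { u : ℕ → ℝ // Monotone u ∧ ∀ i, u i ∈ I },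
    ∑ i ∈ Finset.range p.1, ENNReal.ofReal (e (γ (p.2.1 (i + 1))) (γ (p.2.1 i)))

/-- `X` with distance `e` is an `A`-uniform metric space: it is a locally compact,
incomplete metric space any two of whose points are joined by an `A`-uniform curve. -/
def IsUniformSpcWrt (e : X → X → ℝ) (A : ℝ) : Prop :=
  IsMetricDist e ∧ LocallyCompactWrt e ∧ IncompleteWrt e ∧
  ∀ x y : X, ∃ (a b : ℝ) (γ : ℝ → X), a ≤ b ∧ ContinuousOnWrt e γ (Icc a b) ∧
    γ a = x ∧ γ b = y ∧
    varOn e γ (Icc a b) ≤ ENNReal.ofReal (A * e x y) ∧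
    ∀ t ∈ Icc a b, min (varOn e γ (Icc a t)) (varOn e γ (Icc t b)) ≤
      ENNReal.ofReal (A * bdryDistWrt e (γ t))

/-- `f` is `∂`-Lipschitz with data `(L, lam)`. -/
def PartialLipschitzWrt (e : X → X → ℝ) (e' : Y → Y → ℝ) (L lam : ℝ) (f : X → Y) : Prop :=
  ∀ x y z : X, e y x < lam * bdryDistWrt e x → e z x < lam * bdryDistWrt e x →
    e' (f y) (f z) / bdryDistWrt e' (f x) ≤ L * (e y z / bdryDistWrt e x)

/-- `f` (with inverse `g`) is `∂`-biLipschitz with data `(L, lam)`. -/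
def PartialBiLipschitzWrt (e : X → X → ℝ) (e' : Y → Y → ℝ) (L lam : ℝ)
    (f : X → Y) (g : Y → X) : Prop :=
  1 ≤ L ∧ Function.LeftInverse g f ∧ Function.RightInverse g f ∧
    PartialLipschitzWrt e e' L lam f ∧ PartialLipschitzWrt e' e L lam g

/-- Cross-ratio of a quadruple of points, w.r.t. `e`. -/
def crossRatioWrt (e : X → X → ℝ) (x y z w : X) : ℝ := e x z * e y w / (e x y * e z w)

/-- `f` is `η`-quasimöbius. -/
def QuasiMobiusWrt (e : X → X → ℝ) (e' : Y → Y → ℝ) (η : ℝ → ℝ) (f : X → Y) : Prop :=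
  ∀ x y z w : X, x ≠ y → x ≠ z → x ≠ w → y ≠ z → y ≠ w → z ≠ w →
    crossRatioWrt e' (f x) (f y) (f z) (f w) ≤ η (crossRatioWrt e x y z w)

/-- `f` is `η`-quasisymmetric. -/
def QuasiSymmetricWrt (e : X → X → ℝ) (e' : Y → Y → ℝ) (η : ℝ → ℝ) (f : X → Y) : Prop :=
  ∀ x y z : X, ∀ t : ℝ, 0 ≤ t → e x y ≤ t * e x z → e' (f x) (f y) ≤ η t * e' (f x) (f z)

/-- `η` is (the restriction to `[0,∞)` of) a self-homeomorphism of `[0,∞)`: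
continuous, strictly increasing, fixing `0`, and tending to `∞`. -/
def IsControlFun (η : ℝ → ℝ) : Prop :=
  ContinuousOn η (Ici 0) ∧ StrictMonoOn η (Ici 0) ∧ η 0 = 0 ∧ Tendsto η atTop atTop

/-- The conformal deformation distance with conformal factor `ρ`: the infimum of
`∫ ρ ∘ γ` over all `1`-Lipschitz (w.r.t. `e`) curves joining `x` to `y`
(equivalently, the infimum of `∫_γ ρ ds` over all rectifiable curves joining `x` to `y`). -/
def confDistWrt (e : X → X → ℝ) (ρ : X → ℝ) (x y : X) : ℝ :=
  sInf { l : ℝ | ∃ (T : ℝ) (γ : ℝ → X), 0 ≤ T ∧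
    (∀ s ∈ Icc 0 T, ∀ t ∈ Icc 0 T, e (γ s) (γ t) ≤ |s - t|) ∧
    γ 0 = x ∧ γ T = y ∧ l = ∫ t in (0:ℝ)..T, ρ (γ t) }

/-- The quasihyperbolic metric of the space with distance `e`. -/
def quasiHypWrt (e : X → X → ℝ) : X → X → ℝ :=
  confDistWrt e fun z => (bdryDistWrt e z)⁻¹

/-- `γ` is a geodesic segment from `x` to `y`, parametrized by arclength on `[0, e x y]`. -/
def IsGeodesicSegWrt (e : X → X → ℝ) (γ : ℝ → X) (x y : X) : Prop :=
  γ 0 = x ∧ γ (e x y) = y ∧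
    ∀ s ∈ Icc 0 (e x y), ∀ t ∈ Icc 0 (e x y), e (γ s) (γ t) = |s - t|

/-- Any two points are joined by a geodesic. -/
def GeodesicSpaceWrt (e : X → X → ℝ) : Prop := ∀ x y : X, ∃ γ : ℝ → X, IsGeodesicSegWrt e γ x y

/-- The image of a geodesic segment. -/
def segImageWrt (e : X → X → ℝ) (γ : ℝ → X) (x y : X) : Set X := γ '' Icc 0 (e x y)

/-- `δ`-hyperbolicity: every geodesic triangle is `δ`-thin. -/
def DeltaHyperbolicWrt (e : X → X → ℝ) (δ : ℝ) : Prop :=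
  ∀ (x y z : X) (γ₁ γ₂ γ₃ : ℝ → X),
    IsGeodesicSegWrt e γ₁ x y → IsGeodesicSegWrt e γ₂ y z → IsGeodesicSegWrt e γ₃ z x →
    (∀ p ∈ segImageWrt e γ₁ x y, ∃ q ∈ segImageWrt e γ₂ y z ∪ segImageWrt e γ₃ z x, e p q ≤ δ) ∧
    (∀ p ∈ segImageWrt e γ₂ y z, ∃ q ∈ segImageWrt e γ₁ x y ∪ segImageWrt e γ₃ z x, e p q ≤ δ) ∧
    (∀ p ∈ segImageWrt e γ₃ z x, ∃ q ∈ segImageWrt e γ₁ x y ∪ segImageWrt e γ₂ y z, e p q ≤ δ)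

/-- `γ` is a geodesic ray (defined on `[0,∞)`). -/
def IsGeodesicRayWrt (e : X → X → ℝ) (γ : ℝ → X) : Prop :=
  ∀ s ∈ Ici (0:ℝ), ∀ t ∈ Ici (0:ℝ), e (γ s) (γ t) = |s - t|

/-- `γ` is a geodesic line. -/
def IsGeodesicLineWrt (e : X → X → ℝ) (γ : ℝ → X) : Prop :=
  ∀ s t : ℝ, e (γ s) (γ t) = |s - t|

/-- Two rays are at bounded distance from each other (represent the same
point of the Gromov boundary). -/
def RayEquivWrt (e : X → X → ℝ) (γ σ : ℝ → X) : Prop :=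
  ∃ c : ℝ, ∀ t ∈ Ici (0:ℝ), e (γ t) (σ t) ≤ c

/-- The infimal distance from `x` to the set `s`, w.r.t. `e`. -/
def infDistWrt (e : X → X → ℝ) (x : X) (s : Set X) : ℝ := sInf (e x '' s)

/-- `X` is `K`-roughly starlike from the point `z`. -/
def RoughStarlikeFromPointWrt (e : X → X → ℝ) (K : ℝ) (z : X) : Prop :=
  ∀ x : X, ∃ γ : ℝ → X, IsGeodesicRayWrt e γ ∧ γ 0 = z ∧ infDistWrt e x (γ '' Ici 0) ≤ K

/-- `X` is `K`-roughly starlike from the Gromov boundary point represented by the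
geodesic ray `ρ`: every point lies within distance `K` of a geodesic line starting
from that boundary point. -/
def RoughStarlikeFromRayWrt (e : X → X → ℝ) (K : ℝ) (ρ : ℝ → X) : Prop :=
  ∀ x : X, ∃ γ : ℝ → X, IsGeodesicLineWrt e γ ∧ RayEquivWrt e (fun t => γ (-t)) ρ ∧
    infDistWrt e x (range γ) ≤ K

/-- The Busemann function of the geodesic ray `ρ`:
`b_ρ(x) = lim_{t→∞} (e (ρ t) x - t) = inf_{t ≥ 0} (e (ρ t) x - t)`. -/
def busemannWrt (e : X → X → ℝ) (ρ : ℝ → X) (x : X) : ℝ :=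
  sInf ((fun t => e (ρ t) x - t) '' Ici 0)

/-- `b ∈ 𝔅̂(X)` (either a translated distance function or a translated Busemann
function), and `X` is `K`-roughly starlike from the basepoint of `b`. -/
def BhatStarlike (e : X → X → ℝ) (K : ℝ) (b : X → ℝ) : Prop :=
  (∃ (z : X) (s : ℝ), (∀ x, b x = e x z + s) ∧ RoughStarlikeFromPointWrt e K z) ∨
  (∃ (ρ : ℝ → X) (s : ℝ), IsGeodesicRayWrt e ρ ∧ (∀ x, b x = busemannWrt e ρ x + s) ∧
    RoughStarlikeFromRayWrt e K ρ)

/-- `ρ` is a Gehring–Hayman density with constant `M`: the `ρ`-length of any geodesic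
is at most `M` times the conformal distance between its endpoints. -/
def IsGHDensityWrt (e : X → X → ℝ) (M : ℝ) (ρ : X → ℝ) : Prop :=
  ∀ (x y : X) (γ : ℝ → X), IsGeodesicSegWrt e γ x y →
    (∫ t in (0:ℝ)..(e x y), ρ (γ t)) ≤ M * confDistWrt e ρ x y

/-- The density `ρ_{ε,b}(x) = e^{-ε b(x)}`. -/
def uniformizationDensity (b : X → ℝ) (ε : ℝ) : X → ℝ := fun x => Real.exp (-ε * b x)

/-- The Gromov product of `x` and `y` based at `z`. -/
def gromovProdWrt (e : X → X → ℝ) (z x y : X) : ℝ := (e x z + e y z - e x y) / 2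

/-- The sequence `u` represents the Gromov boundary point of the geodesic ray `ρ`
(with respect to the basepoint `z`). -/
def SeqRepWrt (e : X → X → ℝ) (z : X) (ρ : ℝ → X) (u : ℕ → X) : Prop :=
  Tendsto (fun n => gromovProdWrt e z (u n) (ρ n)) atTop atTop

/-- The Gromov product, based at `z`, of the two boundary points represented by the
geodesic rays `ρ` and `σ` (valued in `[0,∞]`). -/
def bGromovProdWrt (e : X → X → ℝ) (z : X) (ρ σ : ℝ → X) : ℝ≥0∞ :=
  ⨅ (u : { u : ℕ → X // SeqRepWrt e z ρ u }) (v : { v : ℕ → X // SeqRepWrt e z σ v }),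
    Filter.liminf (fun n => ENNReal.ofReal (gromovProdWrt e z (u.1 n) (v.1 n))) atTop

/-- `S(x) = sup_{ω ∈ ∂X} inf_{ξ ∈ ∂X} (ω|ξ)_x`. -/
def Sfun (e : X → X → ℝ) (x : X) : ℝ≥0∞ :=
  ⨆ (ω : { ρ : ℝ → X // IsGeodesicRayWrt e ρ }),
    ⨅ (ξ : { ρ : ℝ → X // IsGeodesicRayWrt e ρ }), bGromovProdWrt e x ω.1 ξ.1

/-- The filter at the left end of the interval `I`. -/
def leftEndFilter (I : Set ℝ) : Filter ℝ :=
  if BddBelow I then 𝓝[I] (sInf I) else atBot ⊓ 𝓟 I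

/-- The filter at the right end of the interval `I`. -/
def rightEndFilter (I : Set ℝ) : Filter ℝ :=
  if BddAbove I then 𝓝[I] (sSup I) else atTop ⊓ 𝓟 I

/-- `γ : I → Ω` is an `A`-uniform curve: it is rectifiable with endpoints
`γ₋, γ₊` in the completion `Ω̄` satisfying `ℓ(γ) ≤ A d(γ₋,γ₊)` (or non-rectifiable with
`d(γ(s),γ(t)) → ∞` towards the endpoints of `I`), and at every time `t` the shorter of
the two subcurves has length at most `A d_Ω(γ(t))`. -/
def IsUniformCurve {Ω : Type*} [MetricSpace Ω] (A : ℝ) (γ : ℝ → Ω) (I : Set ℝ) : Prop :=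
  I.Nonempty ∧ I.OrdConnected ∧ ContinuousOn γ I ∧
  ((varOn (distFun Ω) γ I ≠ ⊤ ∧
     ∃ gm gp : UniformSpace.Completion Ω,
       Tendsto (fun t => (γ t : UniformSpace.Completion Ω)) (leftEndFilter I) (𝓝 gm) ∧
       Tendsto (fun t => (γ t : UniformSpace.Completion Ω)) (rightEndFilter I) (𝓝 gp) ∧
       varOn (distFun Ω) γ I ≤ ENNReal.ofReal (A * dist gm gp)) ∨
   (varOn (distFun Ω) γ I = ⊤ ∧
     Tendsto (fun pq : ℝ × ℝ => dist (γ pq.1) (γ pq.2))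
       (leftEndFilter I ×ˢ rightEndFilter I) atTop)) ∧
  ∀ t ∈ I, min (varOn (distFun Ω) γ (I ∩ Iic t)) (varOn (distFun Ω) γ (I ∩ Ici t)) ≤
    ENNReal.ofReal (A * bdryDistWrt (distFun Ω) (γ t))


section Aux

variable {Ω : Type*} [MetricSpace Ω]

lemma varOn_eq (γ : ℝ → Ω) (I : Set ℝ) : varOn (distFun Ω) γ I = eVariationOn γ I := by
  unfold varOn eVariationOn
  congr 1; funext p; congr 1; funext i
  rw [distFun, edist_dist]

lemma continuousOn_of_wrt {γ : ℝ → Ω} {I : Set ℝ} (h : ContinuousOnWrt (distFun Ω) γ I) :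
    ContinuousOn γ I := by
  rw [Metric.continuousOn_iff]
  intro t ht ε hε
  obtain ⟨η, hη, H⟩ := h t ht ε hε
  exact ⟨η, hη, fun s hs hst => H s hs (by rwa [Real.dist_eq] at hst)⟩

/-- The defining set for the boundary distance. -/
def bdrySet (x : Ω) : Set ℝ :=
  { r : ℝ | ∃ u : ℕ → Ω, CauchyWrt (distFun Ω) u ∧ ¬ ConvWrt (distFun Ω) u ∧
    Tendsto (fun n => distFun Ω x (u n)) atTop (𝓝 r) }

lemma bdryDist_eq (x : Ω) : bdryDistWrt (distFun Ω) x = sInf (bdrySet x) := rfl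

lemma bdrySet_nonneg {x : Ω} {r : ℝ} (hr : r ∈ bdrySet x) : 0 ≤ r := by
  obtain ⟨u, -, -, hu⟩ := hr
  exact le_of_tendsto_of_tendsto' tendsto_const_nhds hu fun n => dist_nonneg

lemma bdrySet_bddBelow (x : Ω) : BddBelow (bdrySet x) :=
  ⟨0, fun r hr => bdrySet_nonneg hr⟩

lemma cauchySeq_dist {u : ℕ → Ω} (hu : CauchyWrt (distFun Ω) u) (x : Ω) :
    ∃ r : ℝ, Tendsto (fun n => distFun Ω x (u n)) atTop (𝓝 r) := by
  have : CauchySeq (fun n => distFun Ω x (u n)) := by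
    rw [Metric.cauchySeq_iff]
    intro ε hε
    obtain ⟨N, hN⟩ := hu ε hε
    refine ⟨N, fun m hm n hn => ?_⟩
    rw [Real.dist_eq]
    simp only [distFun, dist_comm x]
    exact lt_of_le_of_lt (abs_dist_sub_le _ _ _) (hN m hm n hn)
  exact cauchySeq_tendsto_of_complete this

lemma bdrySet_nonempty (hinc : IncompleteWrt (distFun Ω)) (x : Ω) : (bdrySet x).Nonempty := by
  obtain ⟨u, hu, hnc⟩ := hinc
  obtain ⟨r, hr⟩ := cauchySeq_dist hu x
  exact ⟨r, u, hu, hnc, hr⟩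

lemma bdryDist_nonneg (x : Ω) : 0 ≤ bdryDistWrt (distFun Ω) x :=
  Real.sInf_nonneg fun _ hr => bdrySet_nonneg hr

lemma bdryDist_le_add (hinc : IncompleteWrt (distFun Ω)) (x y : Ω) :
    bdryDistWrt (distFun Ω) x ≤ dist x y + bdryDistWrt (distFun Ω) y := by
  rw [bdryDist_eq, bdryDist_eq]
  rw [← sub_le_iff_le_add']
  apply le_csInf (bdrySet_nonempty hinc y)
  rintro r' ⟨u, hu, hnc, hr'⟩
  rw [sub_le_iff_le_add']
  obtain ⟨r, hr⟩ := cauchySeq_dist hu x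
  have h1 : sInf (bdrySet x) ≤ r := csInf_le (bdrySet_bddBelow x) ⟨u, hu, hnc, hr⟩
  have h2 : r ≤ dist x y + r' := by
    apply le_of_tendsto_of_tendsto' hr (tendsto_const_nhds.add hr')
    intro n
    exact dist_triangle x y (u n)
  linarith

lemma abs_bdryDist_sub (hinc : IncompleteWrt (distFun Ω)) (x y : Ω) :
    |bdryDistWrt (distFun Ω) x - bdryDistWrt (distFun Ω) y| ≤ dist x y := by
  rw [abs_sub_le_iff]
  constructor
  · have := bdryDist_le_add hinc x y; linarith
  · have := bdryDist_le_add hinc y x; rw [dist_comm] at this; linarith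

lemma bdryDist_pos (hloc : LocallyCompactWrt (distFun Ω)) (hinc : IncompleteWrt (distFun Ω))
    (x : Ω) : 0 < bdryDistWrt (distFun Ω) x := by
  obtain ⟨r', hr'pos, -, hcpt⟩ := hloc x 1 one_pos
  have key : ∀ r ∈ bdrySet x, r' ≤ r := by
    intro r hr
    by_contra hlt
    push_neg at hlt
    obtain ⟨u, hu, hnc, hten⟩ := hr
    have hev : ∀ᶠ n in atTop, distFun Ω x (u n) < r' := hten.eventually_lt_const hlt
    obtain ⟨N, hN⟩ := eventually_atTop.mp hev
    obtain ⟨y, -, φ, hφ, hconv⟩ := hcpt (fun n => u (n + N)) (fun n => (hN (n + N) (by omega)).le)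
    apply hnc
    refine ⟨y, ?_⟩
    rw [Metric.tendsto_atTop]
    intro δ hδ
    obtain ⟨M, hM⟩ := hu (δ / 2) (by linarith)
    have hev2 : ∀ᶠ n in atTop, distFun Ω (u (φ n + N)) y < δ / 2 :=
      hconv.eventually_lt_const (by linarith)
    obtain ⟨K, hK⟩ := eventually_atTop.mp hev2
    set j := max K M with hj
    have hj1 : distFun Ω (u (φ j + N)) y < δ / 2 := hK j (le_max_left _ _)
    have hiM : M ≤ φ j + N := le_trans (le_max_right K M) (hφ.le_apply.trans (Nat.le_add_right _ _))
    refine ⟨M, fun n hn => ?_⟩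
    have h3 : distFun Ω (u n) (u (φ j + N)) < δ / 2 := hM n hn _ hiM
    simp only [distFun] at h3 hj1 ⊢
    rw [Real.dist_eq, sub_zero, abs_of_nonneg dist_nonneg]
    calc dist (u n) y ≤ dist (u n) (u (φ j + N)) + dist (u (φ j + N)) y := dist_triangle _ _ _
      _ < δ/2 + δ/2 := add_lt_add h3 hj1
      _ = δ := by ring
  calc (0:ℝ) < r' := hr'pos
    _ ≤ sInf (bdrySet x) := le_csInf (bdrySet_nonempty hinc x) key

end Aux
section Var

variable {Ω : Type*} [MetricSpace Ω]

lemma evar_right_small {γ : ℝ → Ω} {t₀ d : ℝ} (htd : t₀ ≤ d)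
    (hcont : ContinuousOn γ (Icc t₀ d)) (hfin : eVariationOn γ (Icc t₀ d) ≠ ⊤)
    {ε : ℝ} (hε : 0 < ε) :
    ∃ δ > 0, ∀ t ∈ Icc t₀ d, t - t₀ < δ → eVariationOn γ (Icc t₀ t) ≤ ENNReal.ofReal ε := by
  set W := eVariationOn γ (Icc t₀ d) with hWdef
  by_cases hsmall : W ≤ ENNReal.ofReal (ε / 2)
  · refine ⟨1, one_pos, fun t ht _ => ?_⟩
    refine le_trans (le_trans (eVariationOn.mono γ (Icc_subset_Icc_right ht.2)) hsmall) ?_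
    exact ENNReal.ofReal_le_ofReal (by linarith)
  push_neg at hsmall
  set c : ℝ≥0∞ := ENNReal.ofReal (ε / 2) with hcdef
  have hc0 : c ≠ 0 := (ENNReal.ofReal_pos.mpr (by linarith)).ne'
  have hW0 : W ≠ 0 := by
    intro h
    rw [h] at hsmall
    exact (not_lt.mpr (zero_le : 0 ≤ c)) hsmall
  have hlt : W - c < W := ENNReal.sub_lt_self hfin hW0 hc0
  have hlt2 : W - c < eVariationOn γ (Icc t₀ d) := hlt
  rw [eVariationOn, lt_iSup_iff] at hlt2
  obtain ⟨⟨n, ⟨u, hu, us⟩⟩, hsum⟩ := hlt2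
  simp only at hsum
  -- prepend t₀ to the partition
  set v : ℕ → ℝ := fun i => Nat.casesOn i t₀ u with hvdef
  have hv : Monotone v := by
    apply monotone_nat_of_le_succ
    intro i
    cases i with
    | zero => exact (us 0).1
    | succ j => exact hu (Nat.le_succ j)
  have vs : ∀ i, v i ∈ Icc t₀ d := by
    intro i
    cases i with
    | zero => exact ⟨le_rfl, htd⟩
    | succ j => exact us j
  have hv0 : v 0 = t₀ := rfl
  set m := n + 1 with hmdef
  have hsum' : W ≤ (∑ i ∈ Finset.range m, edist (γ (v (i+1))) (γ (v i))) + c := by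
    have e1 : ∑ i ∈ Finset.range m, edist (γ (v (i+1))) (γ (v i)) =
        (∑ i ∈ Finset.range n, edist (γ (u (i+1))) (γ (u i))) + edist (γ (v 1)) (γ (v 0)) :=
      Finset.sum_range_succ' _ n
    have e2 : (∑ i ∈ Finset.range n, edist (γ (u (i+1))) (γ (u i))) ≤
        ∑ i ∈ Finset.range m, edist (γ (v (i+1))) (γ (v i)) := by
      rw [e1]; exact le_add_of_nonneg_right zero_le
    calc W = (W - c) + c := (tsub_add_cancel_of_le hsmall.le).symm
      _ ≤ (∑ i ∈ Finset.range n, edist (γ (u (i+1))) (γ (u i))) + c :=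
          add_le_add_left hsum.le c
      _ ≤ _ := add_le_add_left e2 c
  obtain ⟨δ₁, hδ₁, hγc⟩ := Metric.continuousOn_iff.mp hcont t₀ ⟨le_rfl, htd⟩ (ε/4) (by linarith)
  by_cases hex : ∃ i, i ≤ m ∧ t₀ < v i
  swap
  · -- all partition points equal t₀ : variation small, contradiction
    exfalso
    push_neg at hex
    have hz : ∀ i, i ≤ m → v i = t₀ := fun i him =>
      le_antisymm (hex i him) (vs i).1
    have : (∑ i ∈ Finset.range m, edist (γ (v (i+1))) (γ (v i))) = 0 := by
      apply Finset.sum_eq_zero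
      intro i hi
      rw [Finset.mem_range] at hi
      rw [hz i (by omega), hz (i+1) (by omega), edist_self]
    rw [this, zero_add] at hsum'
    exact hsmall.not_ge hsum'
  set k := Nat.find hex with hkdef
  have hkF : k ≤ m ∧ t₀ < v k := Nat.find_spec hex
  have hkmin : ∀ i, i < k → i ≤ m → v i = t₀ := by
    intro i hik him
    have := Nat.find_min hex hik
    push_neg at this
    exact le_antisymm (this him) (vs i).1
  have hk0 : k ≠ 0 := by
    intro h
    rw [h, hv0] at hkF
    exact lt_irrefl _ hkF.2
  set δ₂ := v k - t₀ with hδ₂def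
  have hδ₂ : 0 < δ₂ := sub_pos.mpr hkF.2
  refine ⟨min δ₁ δ₂, lt_min hδ₁ hδ₂, fun t ht htδ => ?_⟩
  have htt₀ : t₀ ≤ t := ht.1
  have htd' : t ≤ d := ht.2
  have htvk : t < v k := by
    have := lt_of_lt_of_le htδ (min_le_right δ₁ δ₂)
    rw [hδ₂def] at this; linarith
  set w : ℕ → ℝ := fun i => max (v i) t with hwdef
  have hw : Monotone w := fun i j hij => max_le_max (hv hij) le_rfl
  have ws : ∀ i, w i ∈ Icc t d := by
    intro i
    exact ⟨le_max_right _ _, max_le (vs i).2 htd'⟩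
  have hwlo : ∀ i, i < k → i ≤ m → w i = t := by
    intro i h1 h2
    rw [hwdef]; simp only
    rw [hkmin i h1 h2]; exact max_eq_right htt₀
  have hwhi : ∀ i, k ≤ i → w i = v i := by
    intro i h1
    rw [hwdef]; simp only
    exact max_eq_left (le_trans htvk.le (hv h1))
  have hterm : ∀ i ∈ Finset.range m, edist (γ (v (i+1))) (γ (v i)) ≤
      edist (γ (w (i+1))) (γ (w i)) + (if i + 1 = k then ENNReal.ofReal (ε/4) else 0) := by
    intro i hi
    rw [Finset.mem_range] at hi
    rcases lt_trichotomy (i+1) k with h | h | h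
    · rw [hkmin (i+1) h (by omega), hkmin i (by omega) (by omega), edist_self]
      exact zero_le
    · rw [if_pos h, hkmin i (by omega) (by omega), hwhi (i+1) h.ge,
        hwlo i (by omega) (by omega)]
      calc edist (γ (v (i+1))) (γ t₀) ≤ edist (γ (v (i+1))) (γ t) + edist (γ t) (γ t₀) :=
            edist_triangle _ _ _
        _ ≤ edist (γ (v (i+1))) (γ t) + ENNReal.ofReal (ε/4) := by
            apply add_le_add_right
            rw [edist_dist]
            apply ENNReal.ofReal_le_ofReal
            apply le_of_lt
            apply hγc t ht
            rw [Real.dist_eq, abs_of_nonneg (by linarith)]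
            exact lt_of_lt_of_le htδ (min_le_left δ₁ δ₂)
    · rw [hwhi (i+1) (by omega), hwhi i (by omega)]
      exact le_add_of_nonneg_right zero_le
  have hSw : (∑ i ∈ Finset.range m, edist (γ (w (i+1))) (γ (w i))) ≤
      eVariationOn γ (Icc t d) := eVariationOn.sum_le (f := γ) (n := m) hw ws
  have hite : (∑ i ∈ Finset.range m, (if i + 1 = k then ENNReal.ofReal (ε/4) else 0)) ≤
      ENNReal.ofReal (ε/4) := by
    have : ∀ i ∈ Finset.range m, (if i + 1 = k then ENNReal.ofReal (ε/4) else 0) =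
        (if i = k - 1 then ENNReal.ofReal (ε/4) else 0) := by
      intro i _
      congr 1
      simp only [eq_iff_iff]
      omega
    rw [Finset.sum_congr rfl this, Finset.sum_ite_eq' (Finset.range m) (k-1)
      (fun _ => ENNReal.ofReal (ε/4))]
    split <;> simp
  have hchain : W ≤ eVariationOn γ (Icc t d) + ENNReal.ofReal (3 * ε / 4) := by
    calc W ≤ (∑ i ∈ Finset.range m, edist (γ (v (i+1))) (γ (v i))) + c := hsum'
      _ ≤ (∑ i ∈ Finset.range m, (edist (γ (w (i+1))) (γ (w i)) +
            (if i + 1 = k then ENNReal.ofReal (ε/4) else 0))) + c :=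
          add_le_add_left (Finset.sum_le_sum hterm) c
      _ = ((∑ i ∈ Finset.range m, edist (γ (w (i+1))) (γ (w i))) +
            (∑ i ∈ Finset.range m, (if i + 1 = k then ENNReal.ofReal (ε/4) else 0))) + c := by
          rw [Finset.sum_add_distrib]
      _ ≤ (eVariationOn γ (Icc t d) + ENNReal.ofReal (ε/4)) + c :=
          add_le_add_left (add_le_add hSw hite) c
      _ = eVariationOn γ (Icc t d) + (ENNReal.ofReal (ε/4) + ENNReal.ofReal (ε/2)) := by
          rw [hcdef, add_assoc]
      _ = eVariationOn γ (Icc t d) + ENNReal.ofReal (3 * ε / 4) := by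
          rw [← ENNReal.ofReal_add (by linarith) (by linarith)]
          congr 1
          ring
  have hsplit : eVariationOn γ (Icc t₀ t) + eVariationOn γ (Icc t d) = W := by
    have h1 := eVariationOn.Icc_add_Icc γ (a := t₀) (b := t) (c := d) htt₀ htd' ht (s := Icc t₀ d)
    have e1 : Icc t₀ d ∩ Icc t₀ t = Icc t₀ t :=
      inter_eq_self_of_subset_right (Icc_subset_Icc_right htd')
    have e2 : Icc t₀ d ∩ Icc t d = Icc t d :=
      inter_eq_self_of_subset_right (Icc_subset_Icc_left htt₀)
    have e3 : Icc t₀ d ∩ Icc t₀ d = Icc t₀ d := inter_self _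
    rw [e1, e2, e3] at h1
    exact h1
  have hW2fin : eVariationOn γ (Icc t d) ≠ ⊤ :=
    ne_top_of_le_ne_top hfin (eVariationOn.mono γ (Icc_subset_Icc_left htt₀))
  have : eVariationOn γ (Icc t₀ t) + eVariationOn γ (Icc t d) ≤
      ENNReal.ofReal (3 * ε / 4) + eVariationOn γ (Icc t d) := by
    rw [hsplit, add_comm]
    exact hchain
  have hfinal := (ENNReal.add_le_add_iff_right hW2fin).mp this
  exact le_trans hfinal (ENNReal.ofReal_le_ofReal (by linarith))

end Var
section Var2

variable {Ω : Type*} [MetricSpace Ω]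

lemma evar_neg_comp (γ : ℝ → Ω) (p q : ℝ) :
    eVariationOn (γ ∘ Neg.neg) (Icc (-q) (-p)) = eVariationOn γ (Icc p q) := by
  rw [eVariationOn.comp_eq_of_antitoneOn γ Neg.neg
    (fun x _ y _ h => neg_le_neg h), Set.image_neg_Icc, neg_neg, neg_neg]

lemma evar_left_small {γ : ℝ → Ω} {c t₀ : ℝ} (hct : c ≤ t₀)
    (hcont : ContinuousOn γ (Icc c t₀)) (hfin : eVariationOn γ (Icc c t₀) ≠ ⊤)
    {ε : ℝ} (hε : 0 < ε) :
    ∃ δ > 0, ∀ t ∈ Icc c t₀, t₀ - t < δ → eVariationOn γ (Icc t t₀) ≤ ENNReal.ofReal ε := by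
  have hcont' : ContinuousOn (γ ∘ Neg.neg) (Icc (-t₀) (-c)) := by
    apply hcont.comp continuousOn_neg
    intro x hx
    exact ⟨by linarith [hx.2], by linarith [hx.1]⟩
  have hfin' : eVariationOn (γ ∘ Neg.neg) (Icc (-t₀) (-c)) ≠ ⊤ := by
    rw [evar_neg_comp]; exact hfin
  obtain ⟨δ, hδ, H⟩ := evar_right_small (neg_le_neg hct) hcont' hfin' hε
  refine ⟨δ, hδ, fun t ht htδ => ?_⟩
  have := H (-t) ⟨neg_le_neg ht.2, neg_le_neg ht.1⟩ (by linarith)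
  rwa [evar_neg_comp] at this

lemma variationOnFromTo_continuousOn {γ : ℝ → Ω} {a b : ℝ} (hab : a ≤ b)
    (hcont : ContinuousOn γ (Icc a b)) (hfin : eVariationOn γ (Icc a b) ≠ ⊤) :
    ContinuousOn (variationOnFromTo γ (Icc a b) a) (Icc a b) := by
  have hlbv : LocallyBoundedVariationOn γ (Icc a b) := fun x y _ _ =>
    ne_top_of_le_ne_top hfin (eVariationOn.mono γ inter_subset_left)
  rw [Metric.continuousOn_iff]
  intro t₀ ht₀ ε hε
  obtain ⟨δr, hδr, Hr⟩ := evar_right_small ht₀.2 (hcont.mono (Icc_subset_Icc_left ht₀.1))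
    (ne_top_of_le_ne_top hfin (eVariationOn.mono γ (Icc_subset_Icc_left ht₀.1))) (half_pos hε)
  obtain ⟨δl, hδl, Hl⟩ := evar_left_small ht₀.1 (hcont.mono (Icc_subset_Icc_right ht₀.2))
    (ne_top_of_le_ne_top hfin (eVariationOn.mono γ (Icc_subset_Icc_right ht₀.2))) (half_pos hε)
  have haI : a ∈ Icc a b := ⟨le_rfl, hab⟩
  refine ⟨min δr δl, lt_min hδr hδl, fun t ht htδ => ?_⟩
  rw [Real.dist_eq] at htδ
  have hadd := variationOnFromTo.add hlbv haI ht₀ ht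
  rw [Real.dist_eq]
  have habs : variationOnFromTo γ (Icc a b) a t - variationOnFromTo γ (Icc a b) a t₀ =
      variationOnFromTo γ (Icc a b) t₀ t := by linarith
  rw [habs]
  rcases le_total t₀ t with h | h
  · have key : eVariationOn γ (Icc t₀ t) ≤ ENNReal.ofReal (ε/2) :=
      Hr t ⟨h, ht.2⟩ (lt_of_le_of_lt (le_abs_self _) (lt_of_lt_of_le htδ (min_le_left _ _)))
    have heq : variationOnFromTo γ (Icc a b) t₀ t = (eVariationOn γ (Icc t₀ t)).toReal := by
      rw [variationOnFromTo.eq_of_le γ (Icc a b) h, Set.Icc_inter_Icc,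
        max_eq_right ht₀.1, min_eq_right ht.2]
    rw [heq, abs_of_nonneg ENNReal.toReal_nonneg]
    calc (eVariationOn γ (Icc t₀ t)).toReal ≤ ε/2 :=
          ENNReal.toReal_le_of_le_ofReal (by linarith) key
      _ < ε := by linarith
  · have key : eVariationOn γ (Icc t t₀) ≤ ENNReal.ofReal (ε/2) := by
      apply Hl t ⟨ht.1, h⟩
      rw [abs_sub_comm] at htδ
      have h1 := le_abs_self (t₀ - t)
      have h2 := min_le_right δr δl
      linarith
    have heq : variationOnFromTo γ (Icc a b) t₀ t = -(eVariationOn γ (Icc t t₀)).toReal := by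
      rw [variationOnFromTo.eq_of_ge γ (Icc a b) h, Set.Icc_inter_Icc,
        max_eq_right ht.1, min_eq_right ht₀.2]
    rw [heq, abs_neg, abs_of_nonneg ENNReal.toReal_nonneg]
    calc (eVariationOn γ (Icc t t₀)).toReal ≤ ε/2 :=
          ENNReal.toReal_le_of_le_ofReal (by linarith) key
      _ < ε := by linarith

end Var2
section Curve

variable {Ω : Type*} [MetricSpace Ω]

lemma exists_unit_curve {A : ℝ} (hU : IsUniformSpcWrt (distFun Ω) A) (hA : 0 ≤ A) (y z : Ω) :
    ∃ (T : ℝ) (ψ : ℝ → Ω), 0 ≤ T ∧ T ≤ A * dist y z ∧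
      (∀ s ∈ Icc 0 T, ∀ t ∈ Icc 0 T, dist (ψ s) (ψ t) ≤ |s - t|) ∧ ψ 0 = y ∧ ψ T = z := by
  obtain ⟨a, b, γ, hab, hcontw, hga, hgb, hvar, -⟩ := hU.2.2.2 y z
  rw [varOn_eq] at hvar
  have hdyz : distFun Ω y z = dist y z := rfl
  rw [hdyz] at hvar
  have hcont := continuousOn_of_wrt hcontw
  have hfin : eVariationOn γ (Icc a b) ≠ ⊤ := ne_top_of_le_ne_top ENNReal.ofReal_ne_top hvar
  have hlbv : LocallyBoundedVariationOn γ (Icc a b) := fun x y _ _ =>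
    ne_top_of_le_ne_top hfin (eVariationOn.mono γ inter_subset_left)
  have haI : a ∈ Icc a b := ⟨le_rfl, hab⟩
  have hbI : b ∈ Icc a b := ⟨hab, le_rfl⟩
  set v := variationOnFromTo γ (Icc a b) a with hvdef
  set T := v b with hTdef
  have hva : v a = 0 := variationOnFromTo.self _ _ a
  have hTnn : 0 ≤ T := variationOnFromTo.nonneg_of_le γ (Icc a b) hab
  have hTeq : T = (eVariationOn γ (Icc a b)).toReal := by
    rw [hTdef, hvdef, variationOnFromTo.eq_of_le γ (Icc a b) hab, inter_self]
  have hTle : T ≤ A * dist y z := by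
    rw [hTeq]
    exact ENNReal.toReal_le_of_le_ofReal (by positivity) hvar
  have hvmono : MonotoneOn v (Icc a b) := variationOnFromTo.monotoneOn hlbv haI
  have hvcont : ContinuousOn v (Icc a b) := variationOnFromTo_continuousOn hab hcont hfin
  have himage : v '' (Icc a b) = Icc 0 T := by
    apply Subset.antisymm
    · rintro _ ⟨t, ht, rfl⟩
      exact ⟨by rw [← hva]; exact hvmono haI ht ht.1, hvmono ht hbI ht.2⟩
    · have h2 := intermediate_value_Icc hab hvcont
      rwa [hva] at h2
  set ψ := naturalParameterization γ (Icc a b) a with hψ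
  refine ⟨T, ψ, hTnn, hTle, ?_, ?_, ?_⟩
  · -- 1-Lipschitz
    have hus : HasUnitSpeedOn ψ (v '' (Icc a b)) :=
      has_unit_speed_naturalParameterization γ hlbv haI
    rw [himage] at hus
    have key : ∀ s t : ℝ, s ∈ Icc 0 T → t ∈ Icc 0 T → s ≤ t → dist (ψ s) (ψ t) ≤ t - s := by
      intro s t hs ht' hst
      have h1 : eVariationOn ψ (Icc 0 T ∩ Icc s t) = ENNReal.ofReal (1 * (t - s)) := by
        simpa using hus hs ht'
      have h2 : edist (ψ s) (ψ t) ≤ eVariationOn ψ (Icc 0 T ∩ Icc s t) :=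
        eVariationOn.edist_le ψ ⟨hs, le_rfl, hst⟩ ⟨ht', hst, le_rfl⟩
      rw [h1, edist_dist] at h2
      have h3 := (ENNReal.ofReal_le_ofReal_iff (by linarith)).mp h2
      linarith
    intro s hs t ht'
    rcases le_total s t with hst | hst
    · rw [abs_sub_comm, abs_of_nonneg (by linarith : (0:ℝ) ≤ t - s)]
      exact key s t hs ht' hst
    · rw [dist_comm, abs_of_nonneg (by linarith : (0:ℝ) ≤ s - t)]
      exact key t s ht' hs hst
  · have h0 : ψ (v a) = γ a := by
      have h := edist_naturalParameterization_eq_zero hlbv haI haI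
      rwa [edist_eq_zero] at h
    rw [← hva, h0]; exact hga
  · have h0 : ψ (v b) = γ b := by
      have h := edist_naturalParameterization_eq_zero hlbv haI hbI
      rwa [edist_eq_zero] at h
    rw [hTdef, h0]; exact hgb

end Curve
section QH

variable {Ω : Type*} [MetricSpace Ω]

/-- The set of admissible curve integrals defining the quasihyperbolic distance. -/
def confSet (x y : Ω) : Set ℝ :=
  { l : ℝ | ∃ (T : ℝ) (γ : ℝ → Ω), 0 ≤ T ∧
    (∀ s ∈ Icc 0 T, ∀ t ∈ Icc 0 T, distFun Ω (γ s) (γ t) ≤ |s - t|) ∧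
    γ 0 = x ∧ γ T = y ∧ l = ∫ t in (0:ℝ)..T, (bdryDistWrt (distFun Ω) (γ t))⁻¹ }

lemma quasiHyp_eq (x y : Ω) : quasiHypWrt (distFun Ω) x y = sInf (confSet x y) := rfl

lemma confSet_nonneg {x y : Ω} {l : ℝ} (hl : l ∈ confSet x y) : 0 ≤ l := by
  obtain ⟨T, γ, hT, hlip, h0, hT', rfl⟩ := hl
  apply intervalIntegral.integral_nonneg hT
  intro u hu
  exact inv_nonneg.mpr (bdryDist_nonneg _)

lemma confSet_bddBelow (x y : Ω) : BddBelow (confSet x y) :=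
  ⟨0, fun _ hl => confSet_nonneg hl⟩

lemma quasiHyp_nonneg (x y : Ω) : 0 ≤ quasiHypWrt (distFun Ω) x y :=
  Real.sInf_nonneg fun _ hl => confSet_nonneg hl

lemma bdry_comp_contOn (hinc : IncompleteWrt (distFun Ω)) {γ : ℝ → Ω} {T : ℝ}
    (hlip : ∀ s ∈ Icc 0 T, ∀ t ∈ Icc 0 T, distFun Ω (γ s) (γ t) ≤ |s - t|) :
    ContinuousOn (fun t => bdryDistWrt (distFun Ω) (γ t)) (Icc 0 T) := by
  rw [Metric.continuousOn_iff]
  intro t ht ε hε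
  refine ⟨ε, hε, fun s hs hst => ?_⟩
  rw [Real.dist_eq]
  calc |bdryDistWrt (distFun Ω) (γ s) - bdryDistWrt (distFun Ω) (γ t)|
      ≤ dist (γ s) (γ t) := abs_bdryDist_sub hinc _ _
    _ ≤ |s - t| := hlip s hs t ht
    _ = dist s t := (Real.dist_eq s t).symm
    _ < ε := hst

lemma integrand_integrable (hinc : IncompleteWrt (distFun Ω))
    (hpos : ∀ w : Ω, 0 < bdryDistWrt (distFun Ω) w) {γ : ℝ → Ω} {T : ℝ} (hT : 0 ≤ T)
    (hlip : ∀ s ∈ Icc 0 T, ∀ t ∈ Icc 0 T, distFun Ω (γ s) (γ t) ≤ |s - t|) :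
    IntervalIntegrable (fun t => (bdryDistWrt (distFun Ω) (γ t))⁻¹)
      MeasureTheory.volume 0 T := by
  apply ContinuousOn.intervalIntegrable
  rw [uIcc_of_le hT]
  exact (bdry_comp_contOn hinc hlip).inv₀ fun t _ => (hpos _).ne'

lemma confSet_lower (hinc : IncompleteWrt (distFun Ω))
    (hpos : ∀ w : Ω, 0 < bdryDistWrt (distFun Ω) w) {x y : Ω} {l : ℝ}
    (hl : l ∈ confSet x y) :
    Real.log (1 + dist x y / bdryDistWrt (distFun Ω) x) ≤ l := by
  obtain ⟨T, γ, hT, hlip, h0, hTy, rfl⟩ := hl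
  set bx := bdryDistWrt (distFun Ω) x with hbxdef
  have hbxpos : 0 < bx := hpos x
  have hbound : ∀ t ∈ Icc 0 T, bdryDistWrt (distFun Ω) (γ t) ≤ bx + t := by
    intro t htI
    have h1 : bdryDistWrt (distFun Ω) (γ t) ≤ dist (γ t) (γ 0) + bdryDistWrt (distFun Ω) (γ 0) :=
      bdryDist_le_add hinc _ _
    rw [h0] at h1
    have h2 : dist (γ t) (γ 0) ≤ |t - 0| := hlip t htI 0 ⟨le_rfl, hT⟩
    rw [h0] at h2
    rw [sub_zero, abs_of_nonneg htI.1] at h2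
    linarith
  have hint1 := integrand_integrable hinc hpos hT hlip
  have hint2 : IntervalIntegrable (fun t => (bx + t)⁻¹) MeasureTheory.volume 0 T := by
    apply ContinuousOn.intervalIntegrable
    rw [uIcc_of_le hT]
    exact (ContinuousOn.inv₀ (by fun_prop) fun t htI => by
      have := htI.1; positivity)
  have hmono : (∫ t in (0:ℝ)..T, (bx + t)⁻¹) ≤
      ∫ t in (0:ℝ)..T, (bdryDistWrt (distFun Ω) (γ t))⁻¹ := by
    apply intervalIntegral.integral_mono_on hT hint2 hint1
    intro t htI
    exact inv_anti₀ (hpos (γ t)) (hbound t htI)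
  have hcalc : (∫ t in (0:ℝ)..T, (bx + t)⁻¹) = Real.log (bx + T) - Real.log bx := by
    have hderiv : ∀ t ∈ uIcc (0:ℝ) T, HasDerivAt (fun u => Real.log (bx + u)) (bx + t)⁻¹ t := by
      intro t htI
      rw [uIcc_of_le hT] at htI
      have h0' : bx + t ≠ 0 := by have := htI.1; positivity
      have := ((hasDerivAt_id t).const_add bx).log h0'
      simpa using this
    have := intervalIntegral.integral_eq_sub_of_hasDerivAt hderiv hint2
    simpa using this
  have hdT : dist x y ≤ T := by
    have h3 := hlip 0 ⟨le_rfl, hT⟩ T ⟨hT, le_rfl⟩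
    rw [h0, hTy] at h3
    rw [zero_sub, abs_neg, abs_of_nonneg hT] at h3
    exact h3
  calc Real.log (1 + dist x y / bx)
      = Real.log (bx + dist x y) - Real.log bx := by
        rw [show (1 + dist x y / bx) = (bx + dist x y)/bx by field_simp,
          Real.log_div (by positivity) (by positivity)]
    _ ≤ Real.log (bx + T) - Real.log bx := by
        have h4 : Real.log (bx + dist x y) ≤ Real.log (bx + T) :=
          Real.log_le_log (by positivity) (by linarith)
        linarith
    _ = ∫ t in (0:ℝ)..T, (bx + t)⁻¹ := hcalc.symm
    _ ≤ _ := hmono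

lemma confSet_nonempty {A : ℝ} (hA : 1 ≤ A) (hU : IsUniformSpcWrt (distFun Ω) A) (x y : Ω) :
    (confSet x y).Nonempty := by
  obtain ⟨T, ψ, hT0, _, hlip, hψ0, hψT⟩ := exists_unit_curve hU (by linarith) x y
  exact ⟨_, T, ψ, hT0, hlip, hψ0, hψT, rfl⟩

lemma quasiHyp_lower {A : ℝ} (hA : 1 ≤ A) (hU : IsUniformSpcWrt (distFun Ω) A)
    (hpos : ∀ w : Ω, 0 < bdryDistWrt (distFun Ω) w) (x y : Ω) :
    Real.log (1 + dist x y / bdryDistWrt (distFun Ω) x) ≤ quasiHypWrt (distFun Ω) x y := by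
  rw [quasiHyp_eq]
  exact le_csInf (confSet_nonempty hA hU x y)
    fun l hl => confSet_lower hU.2.2.1 hpos hl

lemma quasiHyp_upper {A : ℝ} (hA : 1 ≤ A) (hU : IsUniformSpcWrt (distFun Ω) A)
    (hpos : ∀ w : Ω, 0 < bdryDistWrt (distFun Ω) w) {x y z : Ω}
    (hsep : dist x y + A * dist y z ≤ bdryDistWrt (distFun Ω) x / 2) :
    quasiHypWrt (distFun Ω) y z ≤ 2 * A * dist y z / bdryDistWrt (distFun Ω) x := by
  have hinc := hU.2.2.1
  obtain ⟨T, ψ, hT0, hTle, hlip, hψ0, hψT⟩ := exists_unit_curve hU (by linarith) y z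
  set bx := bdryDistWrt (distFun Ω) x with hbxdef
  have hbxpos : 0 < bx := hpos x
  have hball : ∀ t ∈ Icc 0 T, bx / 2 ≤ bdryDistWrt (distFun Ω) (ψ t) := by
    intro t htI
    have h1 : bx ≤ dist x (ψ t) + bdryDistWrt (distFun Ω) (ψ t) := bdryDist_le_add hinc x (ψ t)
    have h2 : dist (ψ 0) (ψ t) ≤ |0 - t| := hlip 0 ⟨le_rfl, hT0⟩ t htI
    rw [hψ0, zero_sub, abs_neg, abs_of_nonneg htI.1] at h2
    have h3 : dist x (ψ t) ≤ dist x y + t := by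
      calc dist x (ψ t) ≤ dist x y + dist y (ψ t) := dist_triangle _ _ _
        _ ≤ dist x y + t := by linarith
    have h4 : t ≤ T := htI.2
    linarith
  have hint1 := integrand_integrable hinc hpos hT0 hlip
  have hmem : (∫ t in (0:ℝ)..T, (bdryDistWrt (distFun Ω) (ψ t))⁻¹) ∈ confSet y z :=
    ⟨T, ψ, hT0, hlip, hψ0, hψT, rfl⟩
  have hle1 : quasiHypWrt (distFun Ω) y z ≤
      ∫ t in (0:ℝ)..T, (bdryDistWrt (distFun Ω) (ψ t))⁻¹ := by
    rw [quasiHyp_eq]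
    exact csInf_le (confSet_bddBelow y z) hmem
  have hle2 : (∫ t in (0:ℝ)..T, (bdryDistWrt (distFun Ω) (ψ t))⁻¹) ≤ T * (bx/2)⁻¹ := by
    have := intervalIntegral.integral_mono_on hT0 hint1 intervalIntegrable_const
      (g := fun _ => (bx/2)⁻¹) (fun t htI => inv_anti₀ (by positivity) (hball t htI))
    rwa [intervalIntegral.integral_const, sub_zero, smul_eq_mul] at this
  have hle3 : T * (bx/2)⁻¹ ≤ 2 * A * dist y z / bx := by
    rw [show (bx/2)⁻¹ = 2 / bx by field_simp, div_eq_mul_inv, div_eq_mul_inv]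
    have hd : (0:ℝ) ≤ dist y z := dist_nonneg
    have : T * 2 ≤ 2 * A * dist y z := by linarith
    have hbinv : (0:ℝ) ≤ bx⁻¹ := by positivity
    calc T * (2 * bx⁻¹) = (T * 2) * bx⁻¹ := by ring
      _ ≤ (2 * A * dist y z) * bx⁻¹ := mul_le_mul_of_nonneg_right this hbinv
  linarith

end QH
lemma exp_sub_one_le {s : ℝ} (hs : 0 ≤ s) : Real.exp s - 1 ≤ s * Real.exp s := by
  have h := Real.add_one_le_exp (-s)
  rw [Real.exp_neg] at h
  have h2 := mul_le_mul_of_nonneg_right h (Real.exp_pos s).le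
  rw [inv_mul_cancel₀ (Real.exp_ne_zero s)] at h2
  nlinarith [Real.exp_pos s]

lemma le_exp_bound {D B k : ℝ} (hB : 0 < B) (hD : 0 ≤ D)
    (h : Real.log (1 + D/B) ≤ k) : D ≤ (Real.exp k - 1) * B := by
  have h1 : (0:ℝ) < 1 + D/B := by positivity
  have h2 : 1 + D/B ≤ Real.exp k := by
    calc 1 + D/B = Real.exp (Real.log (1+D/B)) := (Real.exp_log h1).symm
      _ ≤ Real.exp k := Real.exp_le_exp.mpr h
  have h3 : D/B ≤ Real.exp k - 1 := by linarith
  calc D = (D/B)*B := by field_simp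
    _ ≤ (Real.exp k - 1)*B := mul_le_mul_of_nonneg_right h3 hB.le
/-- If the map induced by `f` between the quasihyperbolizations of two
`A`-uniform metric spaces is `H`-Lipschitz, then `f` is `∂`-Lipschitz with data `(L, λ)`
depending only on `A` and `H`. -/
theorem statement2 (A H : ℝ) (hA : 1 ≤ A) (hH : 0 ≤ H) :
    ∃ L lam : ℝ, 0 ≤ L ∧ 0 < lam ∧ lam < 1 ∧
      ∀ (Ω Ω' : Type*) [MetricSpace Ω] [MetricSpace Ω'] (f : Ω → Ω'),
        IsUniformSpcWrt (distFun Ω) A →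
        IsUniformSpcWrt (distFun Ω') A →
        (∀ x y : Ω, quasiHypWrt (distFun Ω') (f x) (f y) ≤ H * quasiHypWrt (distFun Ω) x y) →
        PartialLipschitzWrt (distFun Ω) (distFun Ω') L lam f := by
  have hA0 : (0:ℝ) < A := by linarith
  set lam : ℝ := 1 / (4 * (A + 1)) with hlamdef
  have hlampos : 0 < lam := by positivity
  have hlamid : lam * (4 * (A + 1)) = 1 := by
    rw [hlamdef]; field_simp
  have hlamlt : lam < 1 := by
    rw [hlamdef, div_lt_one (by linarith)]; linarith
  set L : ℝ := 2 * A * H * Real.exp H * Real.exp H with hLdef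
  have hLnn : 0 ≤ L := by
    have := (Real.exp_pos H).le
    positivity
  refine ⟨L, lam, hLnn, hlampos, hlamlt, ?_⟩
  intro Ω Ω' _ _ f hU hU' hLip
  have hinc := hU.2.2.1
  have hinc' := hU'.2.2.1
  have hpos : ∀ w : Ω, 0 < bdryDistWrt (distFun Ω) w :=
    bdryDist_pos hU.2.1 hinc
  have hpos' : ∀ w : Ω', 0 < bdryDistWrt (distFun Ω') w :=
    bdryDist_pos hU'.2.1 hinc'
  intro x y z hyx hzx
  simp only [distFun] at hyx hzx ⊢
  set d := bdryDistWrt (distFun Ω) x with hddef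
  set d' := bdryDistWrt (distFun Ω') (f x) with hd'def
  have hd : 0 < d := hpos x
  have hd' : 0 < d' := hpos' (f x)
  have hdyz : dist y z ≤ 2 * lam * d := by
    calc dist y z ≤ dist y x + dist x z := dist_triangle _ _ _
      _ = dist y x + dist z x := by rw [dist_comm x z]
      _ ≤ 2 * lam * d := by linarith
  have hlamd : 0 ≤ lam * d := by positivity
  have hAd : 0 ≤ A * dist y z := by positivity
  have hid : lam * (4 * (A + 1)) * d = d := by rw [hlamid, one_mul]
  -- upper quasihyperbolic bounds
  have hsep1 : dist x y + A * dist y z ≤ d / 2 := by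
    have h1 : A * dist y z ≤ A * (2 * lam * d) :=
      mul_le_mul_of_nonneg_left hdyz (by linarith)
    have h2 : dist x y < lam * d := by rw [dist_comm]; exact hyx
    nlinarith
  have hsep2 : dist x x + A * dist x y ≤ d / 2 := by
    rw [dist_self]
    have h2 : dist x y < lam * d := by rw [dist_comm]; exact hyx
    have h1 : A * dist x y ≤ A * (lam * d) :=
      mul_le_mul_of_nonneg_left h2.le (by linarith)
    nlinarith
  have hup1 : quasiHypWrt (distFun Ω) y z ≤ 2 * A * dist y z / d :=
    quasiHyp_upper hA hU hpos hsep1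
  have hup2 : quasiHypWrt (distFun Ω) x y ≤ 2 * A * dist x y / d :=
    quasiHyp_upper hA hU hpos hsep2
  set k₁ := quasiHypWrt (distFun Ω') (f y) (f z) with hk₁def
  set k₂ := quasiHypWrt (distFun Ω') (f x) (f y) with hk₂def
  have hk₁nn : 0 ≤ k₁ := quasiHyp_nonneg _ _
  have hk₂nn : 0 ≤ k₂ := quasiHyp_nonneg _ _
  have hk₁le : k₁ ≤ H * (2 * A * dist y z / d) := by
    calc k₁ ≤ H * quasiHypWrt (distFun Ω) y z := hLip y z
      _ ≤ H * (2 * A * dist y z / d) :=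
        mul_le_mul_of_nonneg_left hup1 hH
  have hk₂le : k₂ ≤ H * (2 * A * dist x y / d) := by
    calc k₂ ≤ H * quasiHypWrt (distFun Ω) x y := hLip x y
      _ ≤ H * (2 * A * dist x y / d) :=
        mul_le_mul_of_nonneg_left hup2 hH
  have hratio1 : 2 * A * dist y z / d ≤ 1 := by
    rw [div_le_one hd]
    nlinarith
  have hratio2 : 2 * A * dist x y / d ≤ 1 := by
    rw [div_le_one hd]
    have h2 : dist x y < lam * d := by rw [dist_comm]; exact hyx
    nlinarith
  have hk₁H : k₁ ≤ H := by
    calc k₁ ≤ H * (2 * A * dist y z / d) := hk₁le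
      _ ≤ H * 1 := mul_le_mul_of_nonneg_left hratio1 hH
      _ = H := mul_one H
  have hk₂H : k₂ ≤ H := by
    calc k₂ ≤ H * (2 * A * dist x y / d) := hk₂le
      _ ≤ H * 1 := mul_le_mul_of_nonneg_left hratio2 hH
      _ = H := mul_one H
  -- lower quasihyperbolic bounds
  have hlow1 : dist (f y) (f z) ≤ (Real.exp k₁ - 1) * bdryDistWrt (distFun Ω') (f y) :=
    le_exp_bound (hpos' (f y)) dist_nonneg
      (quasiHyp_lower hA hU' hpos' (f y) (f z))
  have hlow2 : dist (f x) (f y) ≤ (Real.exp k₂ - 1) * d' :=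
    le_exp_bound hd' dist_nonneg
      (quasiHyp_lower hA hU' hpos' (f x) (f y))
  -- boundary distance comparison
  have hbfy : bdryDistWrt (distFun Ω') (f y) ≤ Real.exp H * d' := by
    have h1 : bdryDistWrt (distFun Ω') (f y) ≤ dist (f y) (f x) + d' :=
      bdryDist_le_add hinc' (f y) (f x)
    rw [dist_comm] at h1
    have h2 : Real.exp k₂ ≤ Real.exp H := Real.exp_le_exp.mpr hk₂H
    have h3 : Real.exp k₂ * d' ≤ Real.exp H * d' := mul_le_mul_of_nonneg_right h2 hd'.le
    have h4 : (Real.exp k₂ - 1) * d' + d' = Real.exp k₂ * d' := by ring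
    linarith
  -- exponential linearization
  have hexp1 : Real.exp k₁ - 1 ≤ k₁ * Real.exp H := by
    calc Real.exp k₁ - 1 ≤ k₁ * Real.exp k₁ := exp_sub_one_le hk₁nn
      _ ≤ k₁ * Real.exp H :=
        mul_le_mul_of_nonneg_left (Real.exp_le_exp.mpr hk₁H) hk₁nn
  have hexp1nn : 0 ≤ Real.exp k₁ - 1 := by
    have := Real.one_le_exp hk₁nn
    linarith
  -- combine
  have hbfynn : 0 ≤ bdryDistWrt (distFun Ω') (f y) := bdryDist_nonneg _
  have hmain : dist (f y) (f z) ≤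
      (H * (2 * A * dist y z / d) * Real.exp H) * (Real.exp H * d') := by
    have s1 : dist (f y) (f z) ≤ (k₁ * Real.exp H) * (Real.exp H * d') := by
      calc dist (f y) (f z) ≤ (Real.exp k₁ - 1) * bdryDistWrt (distFun Ω') (f y) := hlow1
        _ ≤ (k₁ * Real.exp H) * (Real.exp H * d') := by
          apply mul_le_mul hexp1 hbfy hbfynn
          positivity
    have s2 : (k₁ * Real.exp H) * (Real.exp H * d') ≤
        (H * (2 * A * dist y z / d) * Real.exp H) * (Real.exp H * d') := by
      apply mul_le_mul_of_nonneg_right _ (by positivity)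
      exact mul_le_mul_of_nonneg_right hk₁le (Real.exp_pos H).le
    linarith
  rw [div_le_iff₀ hd']
  calc dist (f y) (f z) ≤ (H * (2 * A * dist y z / d) * Real.exp H) * (Real.exp H * d') := hmain
    _ = L * (dist y z / d) * d' := by rw [hLdef]; ring

end Paper

end
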